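/- Uniform Lojasiewicz inequality: let 0 ≠ f ∈ C_r^ω(𝕋,ℝ). Then there are constants δ = δ(f) > 0, S = S(f) > 0, b = b(f) > 0 such that for every g ∈ C_r^ω(𝕋,ℝ) with ‖g − f‖_r < δ, one has mes{x ∈ 𝕋 : |g(x)| < t} < S·t^{b} for all t > 0. -/

import Mathlib

open MeasureTheory Set Real NNReal


/-- The open annulus `A_r = {z ∈ ℂ : 1 - r < |z| < 1 + r}`, identifying `𝕋` with the unit
circle. -/
def annulus (r : ℝ) : Set ℂ := {z : ℂ | 1 - r < ‖z‖ ∧ ‖z‖ < 1 + r}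

/-- Membership of a function in `C_r^ω(𝕋, ℝ)`: a function on `𝕋` (viewed through its extension
`F` to the annulus) which is holomorphic in the open annulus `A_r`, continuous up to its
closure, and real-valued on the unit circle. -/
structure IsCrOmega (r : ℝ) (F : ℂ → ℂ) : Prop where
  holo : DifferentiableOn ℂ F (annulus r)
  cont : ContinuousOn F (closure (annulus r))
  real : ∀ x : ℝ, (F (Complex.exp (2 * π * Complex.I * x))).im = 0


/-- Base diameter lemma: where `|deriv g| ≥ c`, the sublevel set `{|g| < t}` has small diameter. -/
lemma sublevel_subset_Ioo {g g' : ℝ → ℝ} {a b c t : ℝ} (hc : 0 < c)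
    (hder : ∀ x ∈ Icc a b, HasDerivAt g (g' x) x)
    (hlow : ∀ x ∈ Icc a b, c ≤ |g' x|)
    {x₀ : ℝ} (hx₀ : x₀ ∈ {x ∈ Icc a b | |g x| < t}) :
    {x ∈ Icc a b | |g x| < t} ⊆ Ioo (x₀ - 2 * (t / c)) (x₀ + 2 * (t / c)) := by
  have key : ∀ p q : ℝ, p ∈ {x ∈ Icc a b | |g x| < t} → q ∈ {x ∈ Icc a b | |g x| < t} →
      p < q → q - p < 2 * (t / c) := by
    intro p q hp hq hpq
    have hsub : Icc p q ⊆ Icc a b := Icc_subset_Icc hp.1.1 hq.1.2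
    have hcont : ContinuousOn g (Icc p q) := fun x hx =>
      ((hder x (hsub hx)).continuousAt).continuousWithinAt
    obtain ⟨ξ, hξ, hslope⟩ := exists_hasDerivAt_eq_slope g g' hpq hcont
      (fun x hx => hder x (hsub (Ioo_subset_Icc_self hx)))
    have hξ' : ξ ∈ Icc a b := hsub (Ioo_subset_Icc_self hξ)
    have h1 : c * (q - p) ≤ |g q - g p| := by
      have := hlow ξ hξ'
      rw [hslope] at this
      rw [abs_div] at this
      rw [abs_of_pos (by linarith : (0:ℝ) < q - p)] at this
      calc c * (q - p) ≤ (|g q - g p| / (q - p)) * (q - p) := by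
            apply mul_le_mul_of_nonneg_right this (by linarith)
        _ = |g q - g p| := by
            rw [div_mul_eq_mul_div, mul_div_assoc, div_self (by linarith : q - p ≠ 0), mul_one]
    have h2 : |g q - g p| < 2 * t :=
      (abs_sub _ _).trans_lt (by have := hp.2; have := hq.2; linarith)
    have : c * (q - p) < 2 * t := lt_of_le_of_lt h1 h2
    have : q - p < 2 * t / c := by
      rw [lt_div_iff₀ hc]; nlinarith
    linarith [this, (by ring : 2 * t / c = 2 * (t/c))]
  intro y hy
  rcases lt_trichotomy y x₀ with h | h | h
  · have := key y x₀ hy hx₀ h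
    have htc : 0 < 2 * (t / c) := by
      have ht : 0 < t := lt_of_le_of_lt (abs_nonneg _) hx₀.2
      positivity
    constructor <;> [linarith; linarith]
  · subst h
    have ht : 0 < t := lt_of_le_of_lt (abs_nonneg _) hx₀.2
    have htc : 0 < 2 * (t / c) := by positivity
    constructor <;> linarith
  · have := key x₀ y hx₀ hy h
    have ht : 0 < t := lt_of_le_of_lt (abs_nonneg _) hx₀.2
    have htc : 0 < 2 * (t / c) := by positivity
    constructor <;> linarith

lemma sublevel_meas_base {g g' : ℝ → ℝ} {a b c t : ℝ} (hc : 0 < c)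
    (hder : ∀ x ∈ Icc a b, HasDerivAt g (g' x) x)
    (hlow : ∀ x ∈ Icc a b, c ≤ |g' x|) :
    volume {x ∈ Icc a b | |g x| < t} ≤ ENNReal.ofReal (4 * (t / c)) := by
  rcases Set.eq_empty_or_nonempty {x ∈ Icc a b | |g x| < t} with h | ⟨x₀, hx₀⟩
  · rw [show {x | x ∈ Icc a b ∧ |g x| < t} = ∅ from h]; simp
  · calc volume {x ∈ Icc a b | |g x| < t}
        ≤ volume (Ioo (x₀ - 2 * (t / c)) (x₀ + 2 * (t / c))) :=
          measure_mono (sublevel_subset_Ioo hc hder hlow hx₀)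
      _ = ENNReal.ofReal (4 * (t / c)) := by rw [Real.volume_Ioo]; ring_nf
lemma rpow_helper {c t : ℝ} (hc : 0 < c) (ht : 0 < t) (k : ℕ) (hk : 1 ≤ k) :
    (c ^ ((k : ℝ) / ((k : ℝ) + 1)) * t ^ ((1 : ℝ) / ((k : ℝ) + 1))) / c
      = (t / c) ^ ((1 : ℝ) / ((k : ℝ) + 1)) ∧
    (t / (c ^ ((k : ℝ) / ((k : ℝ) + 1)) * t ^ ((1 : ℝ) / ((k : ℝ) + 1)))) ^ ((1 : ℝ) / (k : ℝ))
      = (t / c) ^ ((1 : ℝ) / ((k : ℝ) + 1)) := by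
  have hk0 : (0:ℝ) < (k:ℝ) := by exact_mod_cast Nat.pos_of_ne_zero (by omega)
  have hk1 : (0:ℝ) < (k:ℝ) + 1 := by linarith
  set e : ℝ := (1 : ℝ) / ((k : ℝ) + 1) with he
  have htc : 0 < t / c := div_pos ht hc
  have hce : c ^ ((k:ℝ) / ((k:ℝ) + 1)) = c / c ^ e := by
    have h : (k:ℝ) / ((k:ℝ) + 1) = 1 - e := by rw [he]; field_simp; ring
    rw [h, Real.rpow_sub hc, Real.rpow_one]
  have hs : c ^ ((k:ℝ) / ((k:ℝ) + 1)) * t ^ e = c * (t / c) ^ e := by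
    rw [Real.div_rpow ht.le hc.le, hce]; ring
  constructor
  · rw [hs, mul_comm, mul_div_assoc, div_self hc.ne', mul_one]
  · rw [hs]
    have h2 : t / (c * (t / c) ^ e) = (t / c) ^ (1 - e) := by
      rw [Real.rpow_sub htc, Real.rpow_one, div_mul_eq_div_div]
    rw [h2, ← Real.rpow_mul htc.le]
    congr 1
    rw [he]; field_simp; ring

/-- van der Corput-type sublevel set estimate. -/
lemma sublevel_meas {g : ℝ → ℝ}
    (hder : ∀ (j : ℕ) (x : ℝ), HasDerivAt (iteratedDeriv j g) (iteratedDeriv (j+1) g x) x) :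
    ∀ (k : ℕ), 1 ≤ k → ∀ (a b c t : ℝ), 0 < c → 0 < t →
      (∀ x ∈ Icc a b, c ≤ |iteratedDeriv k g x|) →
      volume {x ∈ Icc a b | |g x| < t}
        ≤ ENNReal.ofReal ((4:ℝ) ^ k * (t / c) ^ ((1 : ℝ) / (k : ℝ))) := by
  intro k hk
  induction k, hk using Nat.le_induction with
  | base =>
    intro a b c t hc ht hlow
    have hder0 : ∀ x ∈ Icc a b, HasDerivAt g (iteratedDeriv 1 g x) x := by
      intro x _
      have := hder 0 x
      rwa [iteratedDeriv_zero] at this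
    refine (sublevel_meas_base hc hder0 ?_).trans ?_
    · intro x hx; exact hlow x hx
    · apply ENNReal.ofReal_le_ofReal
      rw [Nat.cast_one, div_one, Real.rpow_one]
      norm_num
  | succ k hk1 IH =>
    intro a b c t hc ht hlow
    set s : ℝ := c ^ ((k : ℝ) / ((k : ℝ) + 1)) * t ^ ((1 : ℝ) / ((k : ℝ) + 1)) with hs_def
    have hs : 0 < s := mul_pos (Real.rpow_pos_of_pos hc _) (Real.rpow_pos_of_pos ht _)
    obtain ⟨hratio1, hratio2⟩ := rpow_helper hc ht k hk1
    set X : ℝ := (t / c) ^ ((1 : ℝ) / ((k : ℝ) + 1)) with hX_def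
    have hX : 0 < X := Real.rpow_pos_of_pos (div_pos ht hc) _
    have hcast : ((k + 1 : ℕ) : ℝ) = (k : ℝ) + 1 := by push_cast; ring
    -- the set where the k-th derivative is small
    have hderk : ∀ x ∈ Icc a b, HasDerivAt (iteratedDeriv k g) (iteratedDeriv (k+1) g x) x :=
      fun x _ => hder k x
    have hlow' : ∀ x ∈ Icc a b, c ≤ |iteratedDeriv (k+1) g x| := hlow
    rcases Set.eq_empty_or_nonempty {x ∈ Icc a b | |iteratedDeriv k g x| < s} with hJ | ⟨x₀, hx₀⟩
    · -- derivative of order k is ≥ s everywhere on [a,b]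
      have hbig : ∀ x ∈ Icc a b, s ≤ |iteratedDeriv k g x| := by
        intro x hx
        by_contra hcon
        exact absurd (Set.eq_empty_iff_forall_notMem.1 hJ x ⟨hx, lt_of_not_ge hcon⟩) (by simp)
      refine (IH a b s t hs ht hbig).trans (ENNReal.ofReal_le_ofReal ?_)
      rw [hratio2, hcast]
      have h4 : (4:ℝ) ^ k ≤ 4 ^ (k+1) := by
        apply pow_le_pow_right₀ (by norm_num) (by omega)
      nlinarith [hX.le]
    · -- J nonempty: split the interval
      set l : ℝ := x₀ - 2 * (s / c) with hl_def
      set m : ℝ := x₀ + 2 * (s / c) with hm_def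
      have hJsub : {x ∈ Icc a b | |iteratedDeriv k g x| < s} ⊆ Ioo l m :=
        sublevel_subset_Ioo hc hderk hlow' hx₀
      set A1 := {x ∈ Icc a (min l b) | |g x| < t} with hA1
      set A2 := {x ∈ Icc (max m a) b | |g x| < t} with hA2
      have hsplit : {x ∈ Icc a b | |g x| < t} ⊆ Icc l m ∪ (A1 ∪ A2) := by
        intro y hy
        rcases le_or_gt l y with h1 | h1
        · rcases le_or_gt y m with h2 | h2
          · exact Or.inl ⟨h1, h2⟩
          · exact Or.inr (Or.inr ⟨⟨max_le h2.le hy.1.1, hy.1.2⟩, hy.2⟩)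
        · exact Or.inr (Or.inl ⟨⟨hy.1.1, le_min h1.le hy.1.2⟩, hy.2⟩)
      have hbig1 : ∀ x ∈ Icc a (min l b), s ≤ |iteratedDeriv k g x| := by
        intro x hx
        have hxab : x ∈ Icc a b := ⟨hx.1, hx.2.trans (min_le_right _ _)⟩
        by_contra hcon
        have : x ∈ Ioo l m := hJsub ⟨hxab, lt_of_not_ge hcon⟩
        exact absurd this.1 (not_lt.2 (hx.2.trans (min_le_left _ _)))
      have hbig2 : ∀ x ∈ Icc (max m a) b, s ≤ |iteratedDeriv k g x| := by
        intro x hx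
        have hxab : x ∈ Icc a b := ⟨(le_max_right _ _).trans hx.1, hx.2⟩
        by_contra hcon
        have : x ∈ Ioo l m := hJsub ⟨hxab, lt_of_not_ge hcon⟩
        exact absurd this.2 (not_lt.2 ((le_max_left _ _).trans hx.1))
      have hI1 := IH a (min l b) s t hs ht hbig1
      have hI2 := IH (max m a) b s t hs ht hbig2
      calc volume {x ∈ Icc a b | |g x| < t}
          ≤ volume (Icc l m ∪ (A1 ∪ A2)) := measure_mono hsplit
        _ ≤ volume (Icc l m) + (volume A1 + volume A2) :=
            (measure_union_le _ _).trans (by gcongr; exact measure_union_le _ _)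
        _ ≤ ENNReal.ofReal (4 * (s/c)) +
            (ENNReal.ofReal ((4:ℝ) ^ k * (t / s) ^ ((1 : ℝ) / (k : ℝ))) +
             ENNReal.ofReal ((4:ℝ) ^ k * (t / s) ^ ((1 : ℝ) / (k : ℝ)))) := by
            refine add_le_add ?_ (add_le_add hI1 hI2)
            rw [Real.volume_Icc]
            apply ENNReal.ofReal_le_ofReal
            apply le_of_eq
            rw [hm_def, hl_def]; ring
        _ ≤ ENNReal.ofReal ((4:ℝ) ^ (k+1) * (t / c) ^ ((1 : ℝ) / ((k+1 : ℕ) : ℝ))) := by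
            rw [← ENNReal.ofReal_add (by positivity) (by positivity),
              ← ENNReal.ofReal_add (by positivity)
                (by positivity)]
            apply ENNReal.ofReal_le_ofReal
            rw [hratio2, hratio1, hcast]
            have h4 : (4:ℝ) ≤ 4 ^ k := by
              calc (4:ℝ) = 4 ^ 1 := (pow_one 4).symm
              _ ≤ 4 ^ k := pow_le_pow_right₀ (by norm_num) hk1
            calc 4 * X + ((4:ℝ) ^ k * X + 4 ^ k * X) = (4 + 2 * 4 ^ k) * X := by ring
              _ ≤ (4 * 4 ^ k) * X := mul_le_mul_of_nonneg_right (by nlinarith) hX.le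
              _ = 4 ^ (k+1) * X := by rw [pow_succ]; ring
lemma vanish_of_derivs {f : ℂ → ℂ} {c : ℂ} {ρ : ℝ}
    (hf : DifferentiableOn ℂ f (Metric.ball c ρ))
    (h0 : ∀ n, iteratedDeriv n f c = 0) : ∀ z ∈ Metric.ball c ρ, f z = 0 := by
  intro z hz
  have h := Complex.hasSum_taylorSeries_on_ball hf hz
  have h' : HasSum (fun _ : ℕ => (0:ℂ)) (f z) := by
    simpa [h0] using h
  simpa using h'.unique hasSum_zero


/-- Cauchy estimate for iterated derivatives. -/
lemma cauchy_bound {f : ℂ → ℂ} {c : ℂ} {R : ℝ≥0} (hR : 0 < R)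
    (hf : DifferentiableOn ℂ f (Metric.closedBall c R)) {δ : ℝ}
    (hδ : ∀ z ∈ Metric.closedBall c (R:ℝ), ‖f z‖ ≤ δ) (k : ℕ) :
    ‖iteratedDeriv k f c‖ ≤ (k.factorial : ℝ) * δ / (R:ℝ) ^ k := by
  have hP := hf.hasFPowerSeriesOnBall hR
  have hfac := hP.factorial_smul (1:ℂ) k
  have heq : iteratedDeriv k f c = k.factorial • (cauchyPowerSeries f c R k fun _ => (1:ℂ)) := by
    rw [hfac, iteratedDeriv_eq_iteratedFDeriv]
  have hRpos : (0:ℝ) < (R:ℝ) := hR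
  have hδ0 : 0 ≤ δ := le_trans (norm_nonneg _) (hδ c (Metric.mem_closedBall_self hRpos.le))
  have hnorm1 : ‖cauchyPowerSeries f c R k fun _ => (1:ℂ)‖ ≤ ‖cauchyPowerSeries f c R k‖ := by
    have := (cauchyPowerSeries f c R k).le_opNorm (fun _ => (1:ℂ))
    simpa using this
  have hint : (∫ θ : ℝ in (0)..2 * π, ‖f (circleMap c R θ)‖) ≤ 2 * π * δ := by
    have hcont : Continuous fun θ : ℝ => ‖f (circleMap c R θ)‖ := by
      apply Continuous.norm
      apply hf.continuousOn.comp_continuous (continuous_circleMap c R)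
      intro θ
      exact Metric.sphere_subset_closedBall (circleMap_mem_sphere c hRpos.le θ)
    calc (∫ θ : ℝ in (0)..2 * π, ‖f (circleMap c R θ)‖)
        ≤ ∫ _ : ℝ in (0)..2 * π, δ := by
          apply intervalIntegral.integral_mono_on Real.two_pi_pos.le
            (hcont.intervalIntegrable 0 (2*π)) intervalIntegrable_const
          intro θ _
          exact hδ _ (Metric.sphere_subset_closedBall (circleMap_mem_sphere c hRpos.le θ))
      _ = 2 * π * δ := by simp [mul_comm]
  have hcoef : ‖cauchyPowerSeries f c R k‖ ≤ δ * ((R:ℝ)⁻¹) ^ k := by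
    refine (norm_cauchyPowerSeries_le f c R k).trans ?_
    rw [abs_of_nonneg hRpos.le]
    apply mul_le_mul_of_nonneg_right _ (by positivity)
    rw [inv_mul_le_iff₀ Real.two_pi_pos]
    exact hint
  calc ‖iteratedDeriv k f c‖ = (k.factorial : ℝ) * ‖cauchyPowerSeries f c R k fun _ => (1:ℂ)‖ := by
        rw [heq]
        rw [← Nat.cast_smul_eq_nsmul ℂ, norm_smul]
        simp
    _ ≤ (k.factorial : ℝ) * (δ * ((R:ℝ)⁻¹) ^ k) := by
        apply mul_le_mul_of_nonneg_left (hnorm1.trans hcoef) (by positivity)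
    _ = (k.factorial : ℝ) * δ / (R:ℝ) ^ k := by rw [inv_pow]; ring

/-- iterated derivatives of a holomorphic function on an open set are analytic there. -/
lemma iter_analytic {f : ℂ → ℂ} {S : Set ℂ} (hS : IsOpen S) (hf : DifferentiableOn ℂ f S) :
    ∀ k, AnalyticOnNhd ℂ (iteratedDeriv k f) S := by
  intro k
  induction k with
  | zero => rw [iteratedDeriv_zero]; exact hf.analyticOnNhd hS
  | succ k ih => rw [iteratedDeriv_succ]; exact ih.deriv

lemma iteratedDeriv_add_on {f g : ℂ → ℂ} {S : Set ℂ} (hS : IsOpen S)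
    (hf : DifferentiableOn ℂ f S) (hg : DifferentiableOn ℂ g S) :
    ∀ k, ∀ w ∈ S, iteratedDeriv k (fun z => f z + g z) w
      = iteratedDeriv k f w + iteratedDeriv k g w := by
  intro k
  induction k with
  | zero => intro w _; simp [iteratedDeriv_zero]
  | succ k ih =>
    intro w hw
    rw [iteratedDeriv_succ, iteratedDeriv_succ, iteratedDeriv_succ]
    have hev : iteratedDeriv k (fun z => f z + g z)
        =ᶠ[nhds w] fun z => iteratedDeriv k f z + iteratedDeriv k g z := by
      filter_upwards [hS.mem_nhds hw] with z hz using ih z hz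
    rw [hev.deriv_eq]
    exact deriv_add ((iter_analytic hS hf k w hw).differentiableAt)
      ((iter_analytic hS hg k w hw).differentiableAt)

/-- one step of real-derivative transfer. -/
lemma real_step {ψ : ℂ → ℂ} {x : ℝ} (hdiff : DifferentiableAt ℂ ψ (x:ℂ))
    (him : ∀ y : ℝ, (ψ y).im = 0) :
    HasDerivAt (fun y : ℝ => (ψ y).re) ((deriv ψ (x:ℂ)).re) x ∧ (deriv ψ (x:ℂ)).im = 0 := by
  have h1 : HasDerivAt (fun y : ℝ => ψ y) (deriv ψ (x:ℂ)) x :=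
    hdiff.hasDerivAt.comp_ofReal
  have hre : HasDerivAt (fun y : ℝ => (ψ y).re) ((deriv ψ (x:ℂ)).re) x :=
    (Complex.reCLM.hasFDerivAt.comp_hasDerivAt x h1)
  refine ⟨hre, ?_⟩
  have him' : HasDerivAt (fun y : ℝ => (ψ y).im) ((deriv ψ (x:ℂ)).im) x :=
    (Complex.imCLM.hasFDerivAt.comp_hasDerivAt x h1)
  have hconst : (fun y : ℝ => (ψ y).im) = fun _ => (0:ℝ) := funext him
  rw [hconst] at him'
  exact him'.unique (hasDerivAt_const x 0)

/-- full real-derivative transfer for a holomorphic function real on ℝ. -/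
lemma real_transfer {Φ : ℂ → ℂ} {S : Set ℂ} (hS : IsOpen S) (hRS : ∀ x : ℝ, (x:ℂ) ∈ S)
    (hΦ : DifferentiableOn ℂ Φ S) (him : ∀ x : ℝ, (Φ x).im = 0) :
    ∀ k : ℕ, (∀ x : ℝ, (iteratedDeriv k Φ (x:ℂ)).im = 0) ∧
      (iteratedDeriv k (fun x : ℝ => (Φ x).re) = fun x : ℝ => (iteratedDeriv k Φ (x:ℂ)).re) := by
  intro k
  induction k with
  | zero => exact ⟨him, by rw [iteratedDeriv_zero, iteratedDeriv_zero]⟩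
  | succ k ih =>
    have hdiff : ∀ x : ℝ, DifferentiableAt ℂ (iteratedDeriv k Φ) (x:ℂ) := fun x =>
      (iter_analytic hS hΦ k _ (hRS x)).differentiableAt
    have hstep := fun x : ℝ => real_step (hdiff x) ih.1
    constructor
    · intro x
      rw [iteratedDeriv_succ]
      exact (hstep x).2
    · rw [iteratedDeriv_succ, ih.2, iteratedDeriv_succ]
      funext x
      exact (hstep x).1.deriv

/-- derivative facts for the real restriction, in the form needed by `sublevel_meas`. -/
lemma real_transfer_hasDeriv {Φ : ℂ → ℂ} {S : Set ℂ} (hS : IsOpen S) (hRS : ∀ x : ℝ, (x:ℂ) ∈ S)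
    (hΦ : DifferentiableOn ℂ Φ S) (him : ∀ x : ℝ, (Φ x).im = 0) (j : ℕ) (x : ℝ) :
    HasDerivAt (iteratedDeriv j (fun x : ℝ => (Φ x).re))
      (iteratedDeriv (j+1) (fun x : ℝ => (Φ x).re) x) x := by
  have h1 := (real_transfer hS hRS hΦ him j).2
  have h2 := (real_transfer hS hRS hΦ him (j+1)).2
  rw [h1, h2]
  have hdiff : DifferentiableAt ℂ (iteratedDeriv j Φ) (x:ℂ) :=
    (iter_analytic hS hΦ j _ (hRS x)).differentiableAt
  have := (real_step hdiff (real_transfer hS hRS hΦ him j).1).1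
  rwa [← iteratedDeriv_succ] at this

lemma norm_eq_abs_re {z : ℂ} (h : z.im = 0) : ‖z‖ = |z.re| := by
  rw [Complex.norm_def, Complex.normSq_apply, h]
  simp [← Real.sqrt_sq_eq_abs, sq]

set_option maxHeartbeats 2000000 in
theorem statement5 (r : ℝ) (hr : 0 < r)
    (F : ℂ → ℂ) (hF : IsCrOmega r F)
    (hF0 : ∃ x : ℝ, F (Complex.exp (2 * π * Complex.I * x)) ≠ 0) :
    ∃ δ > (0 : ℝ), ∃ S > (0 : ℝ), ∃ b > (0 : ℝ),
      ∀ G : ℂ → ℂ, IsCrOmega r G →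
        (∀ z ∈ annulus r, ‖G z - F z‖ < δ) →
        ∀ t : ℝ, 0 < t →
          volume {x ∈ Ico (0 : ℝ) 1 | ‖G (Complex.exp (2 * π * Complex.I * x))‖ < t} <
            ENNReal.ofReal (S * t ^ b) := by
  obtain ⟨x₀, hx₀⟩ := hF0
  have hπ : 0 < π := Real.pi_pos
  -- choose the strip half-height h
  have hcont1 : Continuous fun y : ℝ => Real.exp (-(2*π)*y) := by continuity
  have h1mem : (0:ℝ) ∈ (fun y : ℝ => Real.exp (-(2*π)*y)) ⁻¹' Ioo (1-r) (1+r) := by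
    simp only [mem_preimage, mul_zero, neg_zero, Real.exp_zero, mem_Ioo]
    constructor <;> linarith
  obtain ⟨h, hh0, hball⟩ := Metric.isOpen_iff.1 (isOpen_Ioo.preimage hcont1) 0 h1mem
  set S : Set ℂ := Complex.im ⁻¹' Ioo (-h) h with hS_def
  have hSopen : IsOpen S := isOpen_Ioo.preimage Complex.continuous_im
  have hSreal : ∀ x : ℝ, (x:ℂ) ∈ S := by
    intro x
    simp only [hS_def, mem_preimage, Complex.ofReal_im, mem_Ioo]
    constructor <;> linarith
  have hSconv : Convex ℝ S := (convex_Ioo (-h) h).linear_preimage Complex.imLm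
  set E : ℂ → ℂ := fun w => Complex.exp (2 * (π:ℂ) * Complex.I * w) with hE_def
  have hEdiff : Differentiable ℂ E :=
    (Complex.differentiable_exp).comp (differentiable_id.const_mul _)
  have hmap : ∀ w ∈ S, E w ∈ annulus r := by
    intro w hw
    have hre : (2 * (π:ℂ) * Complex.I * w).re = -(2*π) * w.im := by
      simp [Complex.mul_re, Complex.mul_im]
    have hnorm : ‖E w‖ = Real.exp (-(2*π) * w.im) := by
      rw [hE_def]
      simp only [Complex.norm_exp, hre]
    have hwim : w.im ∈ Metric.ball (0:ℝ) h := by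
      simp only [Metric.mem_ball, Real.dist_eq, sub_zero]
      have := hw
      simp only [hS_def, mem_preimage, mem_Ioo] at this
      rw [abs_lt]; exact this
    have := hball hwim
    simp only [mem_preimage, mem_Ioo] at this
    exact ⟨by rw [hnorm]; exact this.1, by rw [hnorm]; exact this.2⟩
  have hball_sub : ∀ x : ℝ, Metric.ball (x:ℂ) h ⊆ S := by
    intro x z hz
    simp only [hS_def, mem_preimage, mem_Ioo]
    have h1 : |z.im| < h := by
      have h2 : |(z - (x:ℂ)).im| ≤ ‖z - (x:ℂ)‖ := Complex.abs_im_le_norm _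
      simp only [Complex.sub_im, Complex.ofReal_im, sub_zero] at h2
      calc |z.im| ≤ ‖z - (x:ℂ)‖ := h2
        _ < h := by rwa [← dist_eq_norm, ← Metric.mem_ball]
    rw [abs_lt] at h1; exact h1
  -- the holomorphic lift of F to the strip
  set Ψ : ℂ → ℂ := fun w => F (E w) with hΨ_def
  have hΨ : DifferentiableOn ℂ Ψ S := hF.holo.comp hEdiff.differentiableOn hmap
  set D : ℕ → ℂ → ℂ := fun k => iteratedDeriv k Ψ with hD_def
  -- nondegeneracy: at each real point some derivative of Ψ is nonzero
  have hnz : ∀ x : ℝ, ∃ k : ℕ, D k (x:ℂ) ≠ 0 := by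
    intro x
    by_contra hcon
    push_neg at hcon
    have hvan : ∀ z ∈ Metric.ball ((x:ℂ)) h, Ψ z = 0 :=
      vanish_of_derivs (hΨ.mono (hball_sub x)) hcon
    have hev : Ψ =ᶠ[nhds ((x:ℂ))] 0 := by
      filter_upwards [Metric.ball_mem_nhds ((x:ℂ)) hh0] with z hz using hvan z hz
    have hzero := (hΨ.analyticOnNhd hSopen).eqOn_zero_of_preconnected_of_eventuallyEq_zero
      hSconv.isPreconnected (hSreal x) hev
    exact hx₀ (hzero (hSreal x₀))
  -- continuity of the derivatives along ℝ
  have hcontD : ∀ k : ℕ, Continuous fun x : ℝ => D k (x:ℂ) := by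
    intro k
    have hA := iter_analytic hSopen hΨ k
    apply continuous_iff_continuousAt.2
    intro x
    exact ((hA _ (hSreal x)).differentiableAt.continuousAt).comp
      Complex.continuous_ofReal.continuousAt
  -- finitely many derivative indices suffice on [0,1]
  obtain ⟨T₀, hT₀⟩ := (isCompact_Icc (a := (0:ℝ)) (b := 1)).elim_finite_subcover
    (fun k : ℕ => {x : ℝ | D k (x:ℂ) ≠ 0})
    (fun k => isOpen_compl_singleton.preimage (hcontD k))
    (fun x _ => mem_iUnion.2 (hnz x))
  set N₀ : ℕ := T₀.sup id with hN₀_def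
  have hptk : ∀ x ∈ Icc (0:ℝ) 1, ∃ k ≤ N₀, D k (x:ℂ) ≠ 0 := by
    intro x hx
    have := hT₀ hx
    simp only [mem_iUnion] at this
    obtain ⟨k, hkT, hk⟩ := this
    exact ⟨k, Finset.le_sup (f := id) hkT, hk⟩
  -- uniform lower bound c₀ for the sum of derivative norms
  set m : ℝ → ℝ := fun x => ∑ k ∈ Finset.range (N₀+1), ‖D k (x:ℂ)‖ with hm_def
  have hmcont : Continuous m := by
    apply continuous_finset_sum
    intro k _
    exact (hcontD k).norm
  obtain ⟨xm, hxm, hmin⟩ := isCompact_Icc.exists_isMinOn (⟨0, by norm_num⟩ : (Icc (0:ℝ) 1).Nonempty)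
    hmcont.continuousOn
  set c₀ : ℝ := m xm with hc₀_def
  have hc₀ : 0 < c₀ := by
    obtain ⟨k, hkN, hk⟩ := hptk xm hxm
    calc (0:ℝ) < ‖D k (xm:ℂ)‖ := norm_pos_iff.2 hk
      _ ≤ m xm := Finset.single_le_sum (f := fun k => ‖D k ((xm:ℝ):ℂ)‖)
          (fun i _ => norm_nonneg _) (Finset.mem_range.2 (by omega))
  set c1 : ℝ := c₀ / (N₀+1) with hc1_def
  have hc1 : 0 < c1 := by
    rw [hc1_def]; exact div_pos hc₀ (by positivity)
  have hpt : ∀ x ∈ Icc (0:ℝ) 1, ∃ k ≤ N₀, c1 ≤ ‖D k (x:ℂ)‖ := by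
    intro x hx
    by_contra hcon
    push_neg at hcon
    have hlt : m x < (N₀+1) * c1 := by
      have : ∀ k ∈ Finset.range (N₀+1), ‖D k (x:ℂ)‖ < c1 := by
        intro k hk
        exact hcon k (by simpa using Nat.lt_succ_iff.1 (Finset.mem_range.1 hk))
      calc m x < ∑ _k ∈ Finset.range (N₀+1), c1 :=
            Finset.sum_lt_sum_of_nonempty ⟨0, Finset.mem_range.2 (by omega)⟩ this
        _ = (N₀+1) * c1 := by
            rw [Finset.sum_const, Finset.card_range]
            push_cast; ring
    have hge : c₀ ≤ m x := hmin hx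
    rw [hc1_def] at hlt
    have : (N₀+1 : ℝ) ≠ 0 := by positivity
    field_simp at hlt
    linarith
  -- local intervals on which a fixed derivative of Ψ is bounded below
  have hloc : ∀ x : ℝ, ∃ ε : ℝ, 0 < ε ∧ ∃ k : ℕ, k ≤ N₀ ∧
      (x ∈ Icc (0:ℝ) 1 → ∀ y ∈ Icc (x-ε) (x+ε), 3*c1/4 ≤ ‖D k (y:ℂ)‖) := by
    intro x
    by_cases hx : x ∈ Icc (0:ℝ) 1
    · obtain ⟨k, hkN, hk⟩ := hpt x hx
      have hopen : IsOpen {y : ℝ | 3*c1/4 < ‖D k (y:ℂ)‖} :=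
        isOpen_lt continuous_const (hcontD k).norm
      have hxmem : x ∈ {y : ℝ | 3*c1/4 < ‖D k (y:ℂ)‖} := by
        simp only [mem_setOf_eq]; linarith
      obtain ⟨ε', hε', hsub⟩ := Metric.isOpen_iff.1 hopen x hxmem
      refine ⟨ε'/2, by positivity, k, hkN, fun _ y hy => ?_⟩
      have : y ∈ Metric.ball x ε' := by
        simp only [Metric.mem_ball, Real.dist_eq]
        have h1 := hy.1; have h2 := hy.2
        rw [abs_lt]; constructor <;> linarith
      exact le_of_lt (hsub this)
    · exact ⟨1, one_pos, 0, Nat.zero_le _, fun hx' => absurd hx' hx⟩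
  choose ε hεpos kk hkkN hbound using hloc
  obtain ⟨T, hTmem, hTcov⟩ := (isCompact_Icc (a := (0:ℝ)) (b := 1)).elim_nhds_subcover
    (fun x => Ioo (x - ε x) (x + ε x))
    (fun x _ => Ioo_mem_nhds (by linarith [hεpos x]) (by linarith [hεpos x]))
  -- the radius for Cauchy estimates
  set ρ : ℝ := min (h/2) 1 with hρ_def
  have hρ : 0 < ρ := lt_min (by linarith) one_pos
  have hρ1 : ρ ≤ 1 := min_le_right _ _
  have hρS : ∀ x : ℝ, Metric.closedBall ((x:ℂ)) ρ ⊆ S := by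
    intro x z hz
    apply hball_sub x
    simp only [Metric.mem_ball]
    calc dist z ((x:ℂ)) ≤ ρ := Metric.mem_closedBall.1 hz
      _ ≤ h/2 := min_le_left _ _
      _ < h := by linarith
  -- the perturbation size δ
  set δ : ℝ := c1 * ρ^N₀ / (4 * (N₀.factorial : ℝ)) with hδ_def
  have hδpos : 0 < δ := by
    rw [hδ_def]
    exact div_pos (mul_pos hc1 (pow_pos hρ _))
      (mul_pos (by norm_num) (by exact_mod_cast Nat.factorial_pos N₀))
  have hδk : ∀ k ≤ N₀, (k.factorial : ℝ) * δ / ρ ^ k ≤ c1/4 := by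
    intro k hk
    have h1 : (k.factorial : ℝ) ≤ (N₀.factorial : ℝ) := by
      exact_mod_cast Nat.factorial_le hk
    have h2 : ρ ^ N₀ ≤ ρ ^ k := pow_le_pow_of_le_one hρ.le hρ1 hk
    have hρk : (0:ℝ) < ρ ^ k := by positivity
    rw [div_le_iff₀ hρk, hδ_def]
    have hN₀f : (0:ℝ) < (N₀.factorial : ℝ) := by positivity
    calc (k.factorial : ℝ) * (c1 * ρ^N₀ / (4 * (N₀.factorial : ℝ)))
        ≤ (N₀.factorial : ℝ) * (c1 * ρ^N₀ / (4 * (N₀.factorial : ℝ))) := by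
          apply mul_le_mul_of_nonneg_right h1 (by positivity)
      _ = c1/4 * ρ^N₀ := by field_simp
      _ ≤ c1/4 * ρ^k := by
          apply mul_le_mul_of_nonneg_left h2 (by positivity)
      _ = c1/4 * ρ^k := rfl
  -- final constants
  set c2 : ℝ := c1/2 with hc2_def
  have hc2 : 0 < c2 := by rw [hc2_def]; linarith
  set N' : ℕ := N₀ + 1 with hN'_def
  set e : ℝ := 1 / (N' : ℝ) with he_def
  have hN'pos : (0:ℝ) < (N' : ℝ) := by positivity
  have he : 0 < e := by positivity
  set τ : ℝ := min (c1/4) 1 with hτ_def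
  have hτ : 0 < τ := lt_min (by linarith) one_pos
  have hτle : τ ≤ c1/4 := min_le_left _ _
  have hkN' : ∀ x, kk x ≤ N' := fun x => by rw [hN'_def]; exact Nat.le_succ_of_le (hkkN x)
  set K1 : ℝ := (T.card : ℝ) * 4^N' * (1/c2)^e with hK1_def
  set K2 : ℝ := (1/τ)^e with hK2_def
  have hK1 : 0 ≤ K1 := by
    rw [hK1_def]
    exact mul_nonneg (mul_nonneg (Nat.cast_nonneg _) (pow_nonneg (by norm_num) _))
      (Real.rpow_nonneg (one_div_nonneg.2 hc2.le) _)
  have hK2 : 0 ≤ K2 := by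
    rw [hK2_def]
    exact Real.rpow_nonneg (one_div_nonneg.2 hτ.le) _
  clear_value m c₀ c1 ρ δ c2 N' e τ K1 K2
  refine ⟨δ, hδpos, K1 + K2 + 1, by linarith, e, he, ?_⟩
  intro G hG hclose t ht
  set ΨG : ℂ → ℂ := fun w => G (E w) with hΨG_def
  have hΨGd : DifferentiableOn ℂ ΨG S := hG.holo.comp hEdiff.differentiableOn hmap
  set Φ : ℂ → ℂ := fun w => G (E w) - F (E w) with hΦ_def
  have hΦd : DifferentiableOn ℂ Φ S := hΨGd.sub hΨ
  have hΦbound : ∀ w ∈ S, ‖Φ w‖ ≤ δ := fun w hw => (hclose _ (hmap w hw)).le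
  -- Cauchy estimates for Φ at real points
  have hΦder : ∀ (x : ℝ) (k : ℕ), k ≤ N₀ → ‖iteratedDeriv k Φ (x:ℂ)‖ ≤ c1/4 := by
    intro x k hk
    have hρ' : (0:ℝ≥0) < ρ.toNNReal := Real.toNNReal_pos.2 hρ
    have hcoe : ((ρ.toNNReal : ℝ≥0) : ℝ) = ρ := Real.coe_toNNReal _ hρ.le
    have hcb : DifferentiableOn ℂ Φ (Metric.closedBall ((x:ℂ)) ((ρ.toNNReal : ℝ≥0) : ℝ)) :=
      hΦd.mono (by rw [hcoe]; exact hρS x)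
    have hbd : ∀ z ∈ Metric.closedBall ((x:ℂ)) (((ρ.toNNReal : ℝ≥0) : ℝ)), ‖Φ z‖ ≤ δ :=
      fun z hz => hΦbound z (hρS x (by rwa [hcoe] at hz))
    have hcb2 := cauchy_bound hρ' hcb hbd k
    rw [hcoe] at hcb2
    calc ‖iteratedDeriv k Φ ((x:ℂ))‖ ≤ (k.factorial : ℝ) * δ / ρ ^ k := hcb2
      _ ≤ c1/4 := hδk k hk
  -- derivative decomposition ΨG = Ψ + Φ
  have hsum : ∀ (k : ℕ) (x : ℝ),
      iteratedDeriv k ΨG (x:ℂ) = D k (x:ℂ) + iteratedDeriv k Φ (x:ℂ) := by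
    intro k x
    have hfun : ΨG = fun z => Ψ z + Φ z := by
      funext z
      simp only [hΨG_def, hΨ_def, hΦ_def]
      ring
    rw [hfun, hD_def]
    exact iteratedDeriv_add_on hSopen hΨ hΦd k _ (hSreal x)
  -- lower bound for ΨG-derivatives on the covering intervals
  have hGlow : ∀ x ∈ T, ∀ y ∈ Icc (x - ε x) (x + ε x),
      c2 ≤ ‖iteratedDeriv (kk x) ΨG ((y:ℂ))‖ := by
    intro x hx y hy
    have h1 := hbound x (hTmem x hx) y hy
    have h2 := hΦder y (kk x) (hkkN x)
    have h3 := hsum (kk x) y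
    have h4 : ‖D (kk x) ((y:ℂ))‖ ≤ ‖iteratedDeriv (kk x) ΨG ((y:ℂ))‖ + ‖iteratedDeriv (kk x) Φ ((y:ℂ))‖ := by
      have h5 : D (kk x) ((y:ℂ)) = iteratedDeriv (kk x) ΨG ((y:ℂ)) - iteratedDeriv (kk x) Φ ((y:ℂ)) := by
        rw [h3]; ring
      rw [h5]
      exact norm_sub_le _ _
    rw [hc2_def]
    linarith
  -- realness of ΨG on ℝ and transfer to the real restriction u
  have himG : ∀ x : ℝ, (ΨG ((x:ℂ))).im = 0 := fun x => hG.real x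
  have htrans := real_transfer hSopen hSreal hΨGd himG
  have hder_u := real_transfer_hasDeriv hSopen hSreal hΨGd himG
  set u : ℝ → ℝ := fun x : ℝ => (ΨG ((x:ℂ))).re with hu_def
  have habs : ∀ (k : ℕ) (y : ℝ), |iteratedDeriv k u y| = ‖iteratedDeriv k ΨG ((y:ℂ))‖ := by
    intro k y
    rw [hu_def, (htrans k).2]
    exact (norm_eq_abs_re ((htrans k).1 y)).symm
  have habs0 : ∀ y : ℝ, |u y| = ‖ΨG ((y:ℂ))‖ := fun y => (norm_eq_abs_re (himG y)).symm
  -- covering of the sublevel set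
  have hAset : {x ∈ Ico (0:ℝ) 1 | ‖G (Complex.exp (2 * ↑π * Complex.I * ↑x))‖ < t}
      ⊆ ⋃ x ∈ T, {y ∈ Icc (x - ε x) (x + ε x) | |u y| < t} := by
    intro y hy
    have hy1 : y ∈ Icc (0:ℝ) 1 := Ico_subset_Icc_self hy.1
    have hy2 := hTcov hy1
    simp only [mem_iUnion] at hy2
    obtain ⟨x, hxT, hyx⟩ := hy2
    apply mem_biUnion hxT
    refine ⟨⟨hyx.1.le, hyx.2.le⟩, ?_⟩
    have : |u y| = ‖G (Complex.exp (2 * ↑π * Complex.I * ↑y))‖ := habs0 y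
    rw [this]
    exact hy.2
  have hmeasA : volume {x ∈ Ico (0:ℝ) 1 | ‖G (Complex.exp (2 * ↑π * Complex.I * ↑x))‖ < t}
      ≤ ENNReal.ofReal ((K1 + K2) * t ^ e) := by
    rcases le_or_gt t τ with hτt | hτt
    · -- small t: use the sublevel estimates
      have hpiece : ∀ x ∈ T, volume {y ∈ Icc (x - ε x) (x + ε x) | |u y| < t}
          ≤ ENNReal.ofReal ((4:ℝ)^N' * (t/c2) ^ e) := by
        intro x hx
        have hlow : ∀ y ∈ Icc (x - ε x) (x + ε x), c2 ≤ |iteratedDeriv (kk x) u y| := by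
          intro y hy; rw [habs]; exact hGlow x hx y hy
        rcases Nat.eq_zero_or_pos (kk x) with hk0 | hk1
        · have hempty : {y ∈ Icc (x - ε x) (x + ε x) | |u y| < t} = ∅ := by
            ext y
            simp only [mem_setOf_eq, mem_empty_iff_false, iff_false, not_and]
            intro hy1 hy2
            have hl := hlow y hy1
            rw [hk0, iteratedDeriv_zero] at hl
            have : t ≤ c1/4 := hτt.trans hτle
            rw [hc2_def] at hl
            linarith
          rw [hempty]
          simp
        · have hmeas := sublevel_meas hder_u (kk x) hk1 (x - ε x) (x + ε x) c2 t hc2 ht hlow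
          refine hmeas.trans (ENNReal.ofReal_le_ofReal ?_)
          have h4 : (4:ℝ)^(kk x) ≤ 4^N' :=
            pow_le_pow_right₀ (by norm_num) (hkN' x)
          have hbase1 : t/c2 ≤ 1 := by
            rw [div_le_one hc2]
            calc t ≤ τ := hτt
              _ ≤ c1/4 := hτle
              _ ≤ c2 := by rw [hc2_def]; linarith
          have hbase0 : 0 < t/c2 := div_pos ht hc2
          have hexple : e ≤ (1:ℝ)/((kk x : ℕ) : ℝ) := by
            rw [he_def]
            apply one_div_le_one_div_of_le
            · exact_mod_cast hk1
            · exact_mod_cast hkN' x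
          have hexp : (t/c2) ^ ((1:ℝ)/((kk x : ℕ) : ℝ)) ≤ (t/c2) ^ e :=
            Real.rpow_le_rpow_of_exponent_ge hbase0 hbase1 hexple
          have hr0 : (0:ℝ) ≤ (t/c2) ^ ((1:ℝ)/((kk x : ℕ) : ℝ)) :=
            Real.rpow_nonneg hbase0.le _
          calc (4:ℝ)^(kk x) * (t/c2) ^ ((1:ℝ)/((kk x : ℕ) : ℝ))
              ≤ 4^N' * (t/c2) ^ ((1:ℝ)/((kk x : ℕ) : ℝ)) := mul_le_mul_of_nonneg_right h4 hr0
            _ ≤ 4^N' * (t/c2) ^ e :=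
              mul_le_mul_of_nonneg_left hexp (pow_nonneg (by norm_num) _)
      calc volume {x ∈ Ico (0:ℝ) 1 | ‖G (Complex.exp (2 * ↑π * Complex.I * ↑x))‖ < t}
          ≤ volume (⋃ x ∈ T, {y ∈ Icc (x - ε x) (x + ε x) | |u y| < t}) := measure_mono hAset
        _ ≤ ∑ x ∈ T, volume {y ∈ Icc (x - ε x) (x + ε x) | |u y| < t} :=
            measure_biUnion_finset_le T _
        _ ≤ ∑ _x ∈ T, ENNReal.ofReal ((4:ℝ)^N' * (t/c2) ^ e) :=
            Finset.sum_le_sum hpiece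
        _ = T.card • ENNReal.ofReal ((4:ℝ)^N' * (t/c2) ^ e) := by rw [Finset.sum_const]
        _ = ENNReal.ofReal ((T.card : ℝ) * ((4:ℝ)^N' * (t/c2) ^ e)) := by
            rw [nsmul_eq_mul, ← ENNReal.ofReal_natCast T.card,
              ← ENNReal.ofReal_mul (Nat.cast_nonneg _)]
        _ ≤ ENNReal.ofReal ((K1 + K2) * t ^ e) := by
            apply ENNReal.ofReal_le_ofReal
            have hsplit : (t/c2) ^ e = (1/c2)^e * t^e := by
              rw [div_eq_mul_one_div t c2, Real.mul_rpow ht.le (one_div_nonneg.2 hc2.le)]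
              ring
            rw [hsplit, hK1_def]
            have ht0 : (0:ℝ) ≤ t^e := Real.rpow_nonneg ht.le _
            nlinarith [hK2, ht0, mul_nonneg hK2 ht0]
    · -- large t: the trivial bound
      calc volume {x ∈ Ico (0:ℝ) 1 | ‖G (Complex.exp (2 * ↑π * Complex.I * ↑x))‖ < t}
          ≤ volume (Ico (0:ℝ) 1) := measure_mono (fun y hy => hy.1)
        _ = ENNReal.ofReal 1 := by rw [Real.volume_Ico]; norm_num
        _ ≤ ENNReal.ofReal ((K1 + K2) * t ^ e) := by
            apply ENNReal.ofReal_le_ofReal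
            have h1 : (1:ℝ) ≤ t/τ := (one_le_div hτ).2 hτt.le
            have h2 : (1:ℝ) ≤ (t/τ)^e := by
              calc (1:ℝ) = 1 ^ e := (Real.one_rpow e).symm
                _ ≤ (t/τ)^e := Real.rpow_le_rpow zero_le_one h1 he.le
            have h3 : K2 * t^e = (t/τ)^e := by
              rw [hK2_def, Real.div_rpow ht.le hτ.le, Real.div_rpow zero_le_one hτ.le,
                Real.one_rpow]
              field_simp
            have ht0 : (0:ℝ) ≤ t^e := Real.rpow_nonneg ht.le _
            nlinarith [hK1, ht0, mul_nonneg hK1 ht0]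
  refine lt_of_le_of_lt hmeasA ?_
  have htpos : 0 < t ^ e := Real.rpow_pos_of_pos ht e
  rw [ENNReal.ofReal_lt_ofReal_iff (mul_pos (by linarith) htpos)]
  nlinarith [htpos]
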